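/- Under the same setting, the second-order cross-moment satisfies E[ỹ · S_2(x)] = Σ_{j=1}^k λ̃_j · (A_1)_j ⊗ (A_1)_j, where λ̃_j = E[σ''(z_j)] · a_2(j). -/

import Mathlib

open MeasureTheory

/-- In the same two-layer neural network setting
`f̃(x) = ⟨a₂, σ(A₁ᵀ x + b₁)⟩ + b₂`, assuming the Stein identity
`E[f̃(x)·S₂(x)] = E[∇^{(2)} f̃(x)]` with `S₂(x) = ∇^{(2)}p(x)/p(x)`, the second-order
cross-moment satisfies `E[ỹ · S₂(x)] = Σ_j λ̃_j (A₁)_j ⊗ (A₁)_j` with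
`λ̃_j = E[σ''(z_j)]·a₂(j)`, stated entrywise. -/
theorem second_cross_moment_decomposition
    (d k : ℕ) (p : EuclideanSpace ℝ (Fin d) → ℝ)
    (hp : ContDiff ℝ 2 p) (hppos : ∀ x, 0 < p x)
    (σ : ℝ → ℝ) (hσ : ContDiff ℝ 2 σ)
    (A1 : Fin k → EuclideanSpace ℝ (Fin d)) (a2 b1 : Fin k → ℝ) (b2 : ℝ)
    (f : EuclideanSpace ℝ (Fin d) → ℝ)
    (hf : ∀ x, f x = (∑ j, a2 j * σ ((inner ℝ (A1 j) x : ℝ) + b1 j)) + b2)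
    (μ : Measure (EuclideanSpace ℝ (Fin d)))
    (hμ : μ = volume.withDensity (fun x => ENNReal.ofReal (p x)))
    (hμprob : IsProbabilityMeasure μ)
    (hStein : ∀ v1 v2 : EuclideanSpace ℝ (Fin d),
      ∫ x, f x * ((p x)⁻¹ * iteratedFDeriv ℝ 2 p x ![v1, v2]) ∂μ
        = ∫ x, iteratedFDeriv ℝ 2 f x ![v1, v2] ∂μ)
    (hIntS : ∀ v1 v2 : EuclideanSpace ℝ (Fin d),
      Integrable (fun x => f x * ((p x)⁻¹ * iteratedFDeriv ℝ 2 p x ![v1, v2])) μ)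
    (hIntσ : ∀ j, Integrable
      (fun x => deriv (deriv σ) ((inner ℝ (A1 j) x : ℝ) + b1 j)) μ) :
    ∀ i1 i2 : Fin d,
      ∫ x, f x * ((p x)⁻¹ * iteratedFDeriv ℝ 2 p x
          ![EuclideanSpace.single i1 (1 : ℝ), EuclideanSpace.single i2 (1 : ℝ)]) ∂μ
        = ∑ j, ((∫ x, deriv (deriv σ) ((inner ℝ (A1 j) x : ℝ) + b1 j) ∂μ) * a2 j)
            * (A1 j i1 * A1 j i2) := by
  intro i1 i2
  -- basic derivative facts
  have hz : ∀ (j : Fin k) (y : EuclideanSpace ℝ (Fin d)),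
      HasFDerivAt (fun y : EuclideanSpace ℝ (Fin d) => (inner ℝ (A1 j) y : ℝ) + b1 j) (innerSL ℝ (A1 j)) y :=
    fun j y => ((innerSL ℝ (A1 j)).hasFDerivAt).add_const _
  have hσ1 : ∀ t : ℝ, HasDerivAt σ (deriv σ t) t :=
    fun t => ((hσ.differentiable (by norm_num)) t).hasDerivAt
  have hσd : Differentiable ℝ (deriv σ) := by
    have h2 : ContDiff ℝ ((1 : WithTop ℕ∞) + 1) σ := by exact_mod_cast hσ
    exact (contDiff_succ_iff_deriv.mp h2).2.2.differentiable (by norm_num)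
  have hσ2 : ∀ t : ℝ, HasDerivAt (deriv σ) (deriv (deriv σ) t) t :=
    fun t => (hσd t).hasDerivAt
  -- first derivative of f
  set D : EuclideanSpace ℝ (Fin d) → (EuclideanSpace ℝ (Fin d) →L[ℝ] ℝ) := fun y =>
    ∑ j, (a2 j * deriv σ ((inner ℝ (A1 j) y : ℝ) + b1 j)) • innerSL ℝ (A1 j) with hD_def
  have hfd : ∀ y : EuclideanSpace ℝ (Fin d), HasFDerivAt f (D y) y := by
    intro y
    have hterm : ∀ j ∈ Finset.univ, HasFDerivAt
        (fun y : EuclideanSpace ℝ (Fin d) => a2 j * σ ((inner ℝ (A1 j) y : ℝ) + b1 j))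
        ((a2 j * deriv σ ((inner ℝ (A1 j) y : ℝ) + b1 j)) • innerSL ℝ (A1 j)) y := by
      intro j _
      have h := ((hσ1 _).comp_hasFDerivAt y (hz j y)).const_mul (a2 j)
      rwa [smul_smul] at h
    have hsum := (HasFDerivAt.sum hterm).add_const b2
    refine hsum.congr_of_eventuallyEq ?_
    filter_upwards with y using (by rw [Finset.sum_apply]; exact hf y)
  have hfderiv : fderiv ℝ f = D := funext fun y => (hfd y).fderiv
  -- second derivative
  have hsecond : ∀ (x v1 v2 : EuclideanSpace ℝ (Fin d)),
      iteratedFDeriv ℝ 2 f x ![v1, v2]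
        = ∑ j, a2 j * deriv (deriv σ) ((inner ℝ (A1 j) x : ℝ) + b1 j)
            * (inner ℝ (A1 j) v1 : ℝ) * (inner ℝ (A1 j) v2 : ℝ) := by
    intro x v1 v2
    have hDterm : ∀ j ∈ Finset.univ, HasFDerivAt
        (fun y : EuclideanSpace ℝ (Fin d) => (a2 j * deriv σ ((inner ℝ (A1 j) y : ℝ) + b1 j)) • innerSL ℝ (A1 j))
        (((a2 j * deriv (deriv σ) ((inner ℝ (A1 j) x : ℝ) + b1 j)) • innerSL ℝ (A1 j)).smulRight
          (innerSL ℝ (A1 j))) x := by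
      intro j _
      have hc : HasFDerivAt (fun y : EuclideanSpace ℝ (Fin d) => a2 j * deriv σ ((inner ℝ (A1 j) y : ℝ) + b1 j))
          ((a2 j * deriv (deriv σ) ((inner ℝ (A1 j) x : ℝ) + b1 j)) • innerSL ℝ (A1 j)) x := by
        have h := ((hσ2 _).comp_hasFDerivAt x (hz j x)).const_mul (a2 j)
        rwa [smul_smul] at h
      have h := hc.smul (hasFDerivAt_const (innerSL ℝ (A1 j)) x)
      simp at h; exact h
    have hDd : HasFDerivAt D
        (∑ j, ((a2 j * deriv (deriv σ) ((inner ℝ (A1 j) x : ℝ) + b1 j)) • innerSL ℝ (A1 j)).smulRight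
          (innerSL ℝ (A1 j))) x := by
      exact (HasFDerivAt.sum hDterm).congr_of_eventuallyEq
        (Filter.Eventually.of_forall fun y => by simp only [hD_def, Finset.sum_apply])
    rw [iteratedFDeriv_two_apply, hfderiv, hDd.fderiv]
    simp [ContinuousLinearMap.sum_apply, ContinuousLinearMap.smulRight_apply,
      ContinuousLinearMap.smul_apply, smul_eq_mul]
  -- now the integral computation
  rw [hStein]
  have hrw : ∀ x : EuclideanSpace ℝ (Fin d), iteratedFDeriv ℝ 2 f x
      ![EuclideanSpace.single i1 (1 : ℝ), EuclideanSpace.single i2 (1 : ℝ)]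
      = ∑ j, (a2 j * A1 j i1 * A1 j i2)
          * deriv (deriv σ) ((inner ℝ (A1 j) x : ℝ) + b1 j) := by
    intro x
    rw [hsecond]
    refine Finset.sum_congr rfl fun j _ => ?_
    have h1 : (inner ℝ (A1 j) (EuclideanSpace.single i1 (1 : ℝ)) : ℝ) = A1 j i1 := by
      simp [EuclideanSpace.inner_single_right]
    have h2 : (inner ℝ (A1 j) (EuclideanSpace.single i2 (1 : ℝ)) : ℝ) = A1 j i2 := by
      simp [EuclideanSpace.inner_single_right]
    rw [h1, h2]; ring
  calc (∫ x, iteratedFDeriv ℝ 2 f x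
      ![EuclideanSpace.single i1 (1 : ℝ), EuclideanSpace.single i2 (1 : ℝ)] ∂μ)
      = ∫ x, ∑ j, (a2 j * A1 j i1 * A1 j i2)
          * deriv (deriv σ) ((inner ℝ (A1 j) x : ℝ) + b1 j) ∂μ := by
        exact integral_congr_ae (Filter.Eventually.of_forall hrw)
    _ = ∑ j, ∫ x, (a2 j * A1 j i1 * A1 j i2)
          * deriv (deriv σ) ((inner ℝ (A1 j) x : ℝ) + b1 j) ∂μ := by
        exact integral_finset_sum _ fun j _ => (hIntσ j).const_mul _
    _ = ∑ j, ((∫ x, deriv (deriv σ) ((inner ℝ (A1 j) x : ℝ) + b1 j) ∂μ) * a2 j)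
          * (A1 j i1 * A1 j i2) := by
        refine Finset.sum_congr rfl fun j _ => ?_
        rw [MeasureTheory.integral_const_mul]; ring
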